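/- A numerical semigroup S with multiplicity m is of maximal embedding dimension if and only if the set (S \ {0}) - m = {s - m : s ∈ S, s ≠ 0} is a numerical semigroup. -/

import Mathlib

/-- A numerical semigroup: a subset of ℕ containing 0, closed under addition,
with finite complement. -/
def IsNumericalSemigroup (S : Set ℕ) : Prop :=
  0 ∈ S ∧ (∀ a ∈ S, ∀ b ∈ S, a + b ∈ S) ∧ Sᶜ.Finite

/-- The Frobenius number: the largest gap. -/
noncomputable def frob (S : Set ℕ) : ℕ := sSup Sᶜ

/-- The multiplicity: the smallest nonzero element. -/
noncomputable def mult (S : Set ℕ) : ℕ := sInf (S \ {0})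

/-- The genus: the number of gaps. -/
noncomputable def genus (S : Set ℕ) : ℕ := Sᶜ.ncard

/-- The depth `⌈(f+1)/m⌉`, written as `(f + m) / m` using ℕ-division. -/
noncomputable def depth (S : Set ℕ) : ℕ := (frob S + mult S) / mult S

/-- The embedding dimension: the number of minimal generators, i.e. nonzero elements
that are not the sum of two nonzero elements of `S`. -/
noncomputable def embDim (S : Set ℕ) : ℕ :=
  ((S \ {0}) \ {a | ∃ x ∈ S \ ({0} : Set ℕ), ∃ y ∈ S \ ({0} : Set ℕ), a = x + y}).ncard

namespace Stmt12Aux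

/-- The set of nonzero elements `w` of `S` with `w - m ∉ S` (the nonzero Apéry set). -/
def Aset (S : Set ℕ) : Set ℕ := {w | w ∈ S ∧ w ≠ 0 ∧ w - mult S ∉ S}

lemma basic {S : Set ℕ} (hS : IsNumericalSemigroup S) :
    mult S ∈ S ∧ mult S ≠ 0 ∧ (∀ s ∈ S, s ≠ 0 → mult S ≤ s) := by
  have h1 : S.Infinite := by
    have := hS.2.2.infinite_compl
    simpa using this
  have hinf : (S \ {0}).Infinite := h1.diff (Set.finite_singleton 0)
  have hmem : mult S ∈ S \ {0} := Nat.sInf_mem hinf.nonempty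
  exact ⟨hmem.1, by simpa using hmem.2,
    fun s hs h0 => Nat.sInf_le ⟨hs, by simpa using h0⟩⟩

lemma add_mul_mem {S : Set ℕ} (hS : IsNumericalSemigroup S) {s : ℕ} (hs : s ∈ S) (j : ℕ) :
    s + mult S * j ∈ S := by
  induction j with
  | zero => simpa using hs
  | succ n ih =>
    rw [Nat.mul_succ, ← Nat.add_assoc]
    exact hS.2.1 _ ih _ (basic hS).1

lemma A_bij {S : Set ℕ} (hS : IsNumericalSemigroup S) :
    Set.BijOn (· % mult S) (Aset S) (Set.Ioo 0 (mult S)) := by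
  obtain ⟨hmS, hm0, hle⟩ := basic hS
  set m := mult S with hm
  have hm1 : 1 ≤ m := Nat.one_le_iff_ne_zero.mpr hm0
  have key : ∀ a b, a ∈ Aset S → b ∈ Aset S → a ≤ b → a % m = b % m → a = b := by
    intro a b ha hb hab hmod
    have hdvd : m ∣ b - a := (Nat.modEq_iff_dvd' hab).mp hmod
    obtain ⟨k, hk⟩ := hdvd
    match k with
    | 0 => omega
    | (j+1) =>
      exfalso
      have hb' : b - m = a + m * j := by rw [Nat.mul_succ] at hk; omega
      exact hb.2.2 (hb' ▸ add_mul_mem hS ha.1 j)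
  refine ⟨?_, ?_, ?_⟩
  · rintro w ⟨hwS, hw0, hwm⟩
    constructor
    · rcases Nat.eq_zero_or_pos (w % m) with h | h
      · exfalso
        obtain ⟨k, hk⟩ := Nat.dvd_of_mod_eq_zero h
        match k with
        | 0 => omega
        | (j+1) =>
          have hw' : w - m = 0 + m * j := by rw [Nat.mul_succ] at hk; omega
          exact hwm (hw' ▸ add_mul_mem hS hS.1 j)
      · exact h
    · exact Nat.mod_lt _ hm1
  · intro a ha b hb hab
    rcases le_total a b with h | h
    · exact key a b ha hb h hab
    · exact (key b a hb ha h hab.symm).symm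
  · rintro r ⟨hr0, hrm⟩
    obtain ⟨N, hN⟩ := hS.2.2.bddAbove
    have hc : r + m * (N + 1) ∈ S ∧ (r + m * (N + 1)) % m = r := by
      constructor
      · by_contra hc
        have := hN hc
        have : N + 1 ≤ m * (N + 1) := Nat.le_mul_of_pos_left _ hm1
        omega
      · rw [Nat.add_mul_mod_self_left]
        exact Nat.mod_eq_of_lt hrm
    set P := {n | n ∈ S ∧ n % m = r} with hP
    have hPne : P.Nonempty := ⟨r + m * (N + 1), hc⟩
    have hw := Nat.sInf_mem hPne
    set w := sInf P with hwdef
    have hw0 : w ≠ 0 := by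
      intro h
      rw [h] at hw
      simp [hP] at hw
      omega
    have hmw : m ≤ w := hle w hw.1 hw0
    refine ⟨w, ⟨hw.1, hw0, ?_⟩, hw.2⟩
    intro hwm
    have hmod : (w - m) % m = r := by
      have h1 : (w - m + m) % m = (w - m) % m := Nat.add_mod_right _ _
      have h2 : w - m + m = w := Nat.sub_add_cancel hmw
      rw [h2] at h1
      rw [← h1]; exact hw.2
    have := Nat.sInf_le (show w - m ∈ P from ⟨hwm, hmod⟩)
    omega

lemma A_ncard {S : Set ℕ} (hS : IsNumericalSemigroup S) :
    (Aset S).ncard = mult S - 1 := by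
  have hb := A_bij hS
  have : (Aset S).ncard = (Set.Ioo 0 (mult S)).ncard := by
    rw [← hb.image_eq, Set.ncard_image_of_injOn hb.injOn]
  rw [this, ← Finset.coe_Ioo, Set.ncard_coe_finset, Nat.card_Ioo]; omega

lemma A_finite {S : Set ℕ} (hS : IsNumericalSemigroup S) : (Aset S).Finite :=
  Set.Finite.of_finite_image ((A_bij hS).image_eq ▸ Set.finite_Ioo 0 (mult S))
    (A_bij hS).injOn

end Stmt12Aux

open Stmt12Aux in
theorem stmt_12 (S : Set ℕ) (hS : IsNumericalSemigroup S) :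
    embDim S = mult S ↔
      IsNumericalSemigroup ((fun s => s - mult S) '' (S \ {0})) := by
  obtain ⟨hmS, hm0, hle⟩ := basic hS
  set m := mult S with hmdef
  have hm1 : 1 ≤ m := Nat.one_le_iff_ne_zero.mpr hm0
  set G := ((S \ {0}) \ {a | ∃ x ∈ S \ ({0} : Set ℕ), ∃ y ∈ S \ ({0} : Set ℕ), a = x + y})
    with hGdef
  have hGmem : ∀ g, g ∈ G ↔ (g ∈ S ∧ g ≠ 0) ∧
      ¬ ∃ x, (x ∈ S ∧ x ≠ 0) ∧ ∃ y, (y ∈ S ∧ y ≠ 0) ∧ g = x + y := by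
    intro g
    simp [hGdef, Set.mem_diff, Set.mem_singleton_iff, Set.mem_setOf_eq, and_assoc]
  have hGsub : G ⊆ insert m (Aset S) := by
    intro g hg
    rw [hGmem] at hg
    by_cases hgm : g = m
    · exact hgm ▸ Set.mem_insert _ _
    · refine Set.mem_insert_of_mem _ ⟨hg.1.1, hg.1.2, fun hgS => hg.2 ?_⟩
      have hmg : m ≤ g := hle g hg.1.1 hg.1.2
      exact ⟨m, ⟨hmS, hm0⟩, g - m, ⟨hgS, by omega⟩, by omega⟩
  have hmA : m ∉ Aset S := by
    intro h
    exact h.2.2 (show m - m ∈ S by rw [Nat.sub_self]; exact hS.1)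
  have hinsfin : (insert m (Aset S)).Finite := (A_finite hS).insert m
  have hinscard : (insert m (Aset S)).ncard = m := by
    rw [Set.ncard_insert_of_notMem hmA (A_finite hS), A_ncard hS]
    omega
  have hED : embDim S = G.ncard := rfl
  -- the closure condition
  set C := ∀ x ∈ S, x ≠ 0 → ∀ y ∈ S, y ≠ 0 → x + y - m ∈ S with hCdef
  have h1 : embDim S = m ↔ C := by
    constructor
    · intro h
      have hGeq : G = insert m (Aset S) :=
        Set.eq_of_subset_of_ncard_le hGsub (by rw [hinscard, ← hED, h]) hinsfin
      intro x hx hx0 y hy hy0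
      by_contra hxy
      have hmemA : x + y ∈ Aset S := ⟨hS.2.1 x hx y hy, by omega, hxy⟩
      have : x + y ∈ G := hGeq ▸ Set.mem_insert_of_mem _ hmemA
      rw [hGmem] at this
      exact this.2 ⟨x, ⟨hx, hx0⟩, y, ⟨hy, hy0⟩, rfl⟩
    · intro hC
      have hsub2 : insert m (Aset S) ⊆ G := by
        intro g hg
        rw [hGmem]
        rcases Set.mem_insert_iff.mp hg with h | h
        · subst h
          refine ⟨⟨hmS, hm0⟩, ?_⟩
          rintro ⟨x, ⟨hxS, hx0⟩, y, ⟨hyS, hy0⟩, hxy⟩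
          have := hle x hxS hx0
          have := hle y hyS hy0
          omega
        · refine ⟨⟨h.1, h.2.1⟩, ?_⟩
          rintro ⟨x, ⟨hxS, hx0⟩, y, ⟨hyS, hy0⟩, hxy⟩
          exact h.2.2 (hxy ▸ hC x hxS hx0 y hyS hy0)
      rw [hED, Set.Subset.antisymm hGsub hsub2, hinscard]
  rw [h1]
  constructor
  · intro hC
    refine ⟨⟨m, ⟨hmS, by simpa using hm0⟩, Nat.sub_self m⟩, ?_, ?_⟩
    · rintro a ⟨x, hx, hax⟩ b ⟨y, hy, hby⟩
      simp only [Set.mem_diff, Set.mem_singleton_iff] at hx hy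
      have hmx := hle x hx.1 hx.2
      have hmy := hle y hy.1 hy.2
      refine ⟨x + y - m, ⟨hC x hx.1 hx.2 y hy.1 hy.2, by simp only [Set.mem_singleton_iff]; omega⟩, ?_⟩
      simp only at hax hby ⊢
      omega
    · have hsub : ((fun s => s - m) '' (S \ {0}))ᶜ ⊆ (fun n => n + m) ⁻¹' Sᶜ := by
        intro n hn
        simp only [Set.mem_compl_iff, Set.mem_preimage]
        intro hmem
        exact hn ⟨n + m, ⟨hmem, by simp; omega⟩, by simp⟩
      exact (hS.2.2.preimage (fun a _ b _ h => by omega)).subset hsub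
  · intro hT
    intro x hx hx0 y hy hy0
    have hxT : x - m ∈ (fun s => s - m) '' (S \ {0}) :=
      ⟨x, ⟨hx, by simpa using hx0⟩, rfl⟩
    have hyT : y - m ∈ (fun s => s - m) '' (S \ {0}) :=
      ⟨y, ⟨hy, by simpa using hy0⟩, rfl⟩
    obtain ⟨s, hs, hseq⟩ := hT.2.1 _ hxT _ hyT
    simp only [Set.mem_diff, Set.mem_singleton_iff] at hs
    have hms := hle s hs.1 hs.2
    have hmx := hle x hx hx0
    have hmy := hle y hy hy0
    simp only at hseq
    have : s = x + y - m := by omega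
    exact this ▸ hs.1
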